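/- Let p be a real polynomial of degree n ≥ 2 with only real zeroes and at least two distinct zeroes. Then the rational function R(x) = p(x)p''(x)/(p'(x))² satisfies R(x) < (n−1)/n for every real x with p'(x) ≠ 0. -/

import Mathlib

open Polynomial


lemma splits_of_complex_roots_real (p : ℝ[X])
    (h : ∀ z : ℂ, (p.map (algebraMap ℝ ℂ)).IsRoot z → z.im = 0) :
    p.Splits := by
  have key : ∀ d : ℕ, ∀ p : ℝ[X], p.natDegree = d →
      (∀ z : ℂ, (p.map (algebraMap ℝ ℂ)).IsRoot z → z.im = 0) →
      p.Splits := by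
    intro d
    induction d using Nat.strong_induction_on with
    | _ d ih =>
    intro p hd h
    rcases le_or_gt p.natDegree 1 with h1 | h1
    · exact Splits.of_natDegree_le_one h1
    · have hp0 : p ≠ 0 := fun h0 => by simp [h0] at h1
      have hdeg : (p.map (algebraMap ℝ ℂ)).degree ≠ 0 := by
        rw [degree_map]
        intro hc
        have := Polynomial.natDegree_eq_zero_iff_degree_le_zero.mpr hc.le
        omega
      obtain ⟨z, hz⟩ := Complex.isAlgClosed.exists_root _ hdeg
      have hzim := h z hz
      have hzr : z = Complex.ofReal z.re := Complex.ext rfl (by simp [hzim])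
      have hroot : p.IsRoot z.re := by
        have heq : (p.map (algebraMap ℝ ℂ)).eval (algebraMap ℝ ℂ z.re)
            = algebraMap ℝ ℂ (p.eval z.re) := by
          rw [eval_map, eval₂_at_apply]
        rw [IsRoot, hzr] at hz
        have h2 : algebraMap ℝ ℂ (p.eval z.re) = 0 := by rw [← heq]; exact hz
        exact (algebraMap ℝ ℂ).injective (h2.trans (map_zero _).symm)
      obtain ⟨q, hpq⟩ := (dvd_iff_isRoot.mpr hroot)
      have hq0 : q ≠ 0 := fun h0 => hp0 (by simp [hpq, h0])
      have hqdeg : q.natDegree < d := by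
        have := hpq ▸ natDegree_mul (X_sub_C_ne_zero z.re) hq0
        rw [natDegree_X_sub_C] at this
        omega
      have hqroots : ∀ w : ℂ, (q.map (algebraMap ℝ ℂ)).IsRoot w → w.im = 0 := by
        intro w hw
        apply h w
        rw [hpq, Polynomial.map_mul, IsRoot, eval_mul, hw, mul_zero]
      rw [hpq]
      exact (Splits.X_sub_C _).mul (ih _ hqdeg q rfl hqroots)
  exact key _ p rfl h

lemma prod_eval_ne_zero (x : ℝ) (t : Multiset ℝ) (ht : ∀ r ∈ t, x - r ≠ 0) :
    ((t.map (fun r => X - C r)).prod).eval x ≠ 0 := by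
  rw [eval_multiset_prod, Multiset.map_map]
  apply Multiset.prod_ne_zero
  intro hmem
  obtain ⟨r, hr, hr0⟩ := Multiset.mem_map.mp hmem
  exact ht r hr (by simpa using hr0)

lemma deriv_prod_eval (x : ℝ) (t : Multiset ℝ) (ht : ∀ r ∈ t, x - r ≠ 0) :
    (derivative ((t.map (fun r => X - C r)).prod)).eval x
      = ((t.map (fun r => X - C r)).prod).eval x * (t.map (fun r => (x - r)⁻¹)).sum ∧
    (derivative (derivative ((t.map (fun r => X - C r)).prod))).eval x
      = ((t.map (fun r => X - C r)).prod).eval x *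
        (((t.map (fun r => (x - r)⁻¹)).sum)^2 - (t.map (fun r => ((x - r)⁻¹)^2)).sum) := by
  induction t using Multiset.induction_on with
  | empty => simp
  | cons r s ih =>
    have hr : x - r ≠ 0 := ht r (Multiset.mem_cons_self r s)
    have hs : ∀ u ∈ s, x - u ≠ 0 := fun u hu => ht u (Multiset.mem_cons_of_mem hu)
    obtain ⟨ih1, ih2⟩ := ih hs
    simp only [Multiset.map_cons, Multiset.prod_cons, Multiset.sum_cons, derivative_mul,
      derivative_sub, derivative_X, derivative_C, sub_zero, one_mul, derivative_add,
      eval_add, eval_mul, eval_sub, eval_X, eval_C, eval_one, zero_mul, zero_add, mul_one]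
    rw [ih1, ih2]
    constructor
    · field_simp
    · field_simp
      ring


lemma strict_cauchy {m : ℕ} (a : Fin m → ℝ) (j k : Fin m) (hjk : a j ≠ a k) :
    (∑ i, a i)^2 < m * ∑ i, (a i)^2 := by
  have hm : 0 < m := j.pos
  have hmR : (0:ℝ) < m := by exact_mod_cast hm
  set S := ∑ i, a i with hS
  set μ := S / m with hμ
  have key : ∑ i, (a i - μ)^2 = (∑ i, (a i)^2) - S^2 / m := by
    have expand : ∀ i ∈ Finset.univ, (a i - μ)^2 = (a i)^2 - 2*μ*(a i) + μ^2 :=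
      fun i _ => by ring
    rw [Finset.sum_congr rfl expand, Finset.sum_add_distrib, Finset.sum_sub_distrib,
      ← Finset.mul_sum, Finset.sum_const, Finset.card_univ, Fintype.card_fin, ← hS]
    rw [hμ]
    field_simp
    have hm0 : (m:ℝ) ≠ 0 := hmR.ne'
    rw [nsmul_eq_mul]
    have e : (m:ℝ) * (m * (S^2 / (m:ℝ)^2)) = S^2 := by field_simp
    rw [e]
    ring
  have hne : a j ≠ μ ∨ a k ≠ μ := by
    by_contra hcon
    push_neg at hcon
    exact hjk (hcon.1.trans hcon.2.symm)
  have hpos : 0 < ∑ i, (a i - μ)^2 := by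
    rcases hne with hne | hne
    · exact Finset.sum_pos' (fun i _ => sq_nonneg _)
        ⟨j, Finset.mem_univ j, sq_pos_of_ne_zero (sub_ne_zero.mpr hne)⟩
    · exact Finset.sum_pos' (fun i _ => sq_nonneg _)
        ⟨k, Finset.mem_univ k, sq_pos_of_ne_zero (sub_ne_zero.mpr hne)⟩
  rw [key] at hpos
  have := (div_lt_iff₀ hmR).mp (by linarith : S^2 / m < ∑ i, (a i)^2)
  linarith

/-- Let `p` be a real polynomial of degree `n ≥ 2` with only real zeroes and at
least two distinct zeroes. Then `R(x) = p(x)p''(x)/(p'(x))² < (n−1)/n` for every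
real `x` with `p'(x) ≠ 0`. -/
theorem R_lt_newton_bound (p : ℝ[X]) (n : ℕ) (hn : p.natDegree = n) (hn2 : 2 ≤ n)
    (hreal : ∀ z : ℂ, (p.map (algebraMap ℝ ℂ)).IsRoot z → z.im = 0)
    (hdist : ∃ x y : ℝ, x ≠ y ∧ p.IsRoot x ∧ p.IsRoot y) :
    ∀ x : ℝ, (derivative p).eval x ≠ 0 →
      p.eval x * (derivative (derivative p)).eval x / ((derivative p).eval x) ^ 2
        < ((n : ℝ) - 1) / n := by
  intro x hx
  have h2R : (2:ℝ) ≤ n := by exact_mod_cast hn2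
  have hnR : (0:ℝ) < n := by linarith
  have hrhs : (0:ℝ) < ((n:ℝ) - 1)/n := div_pos (by linarith) hnR
  by_cases heval : p.eval x = 0
  · rw [heval]; simpa using hrhs
  · have hp0 : p ≠ 0 := fun h0 => by rw [h0, natDegree_zero] at hn; omega
    have hsplit := splits_of_complex_roots_real p hreal
    have hfact := hsplit.eq_prod_roots
    set c := p.leadingCoeff with hcdef
    have hc : c ≠ 0 := leadingCoeff_ne_zero.mpr hp0
    set t := p.roots with htdef
    have hcard : Multiset.card t = n := by
      rw [htdef, splits_iff_card_roots.mp hsplit, hn]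
    have htne : ∀ r ∈ t, x - r ≠ 0 := by
      intro r hr h0
      have hroot : p.IsRoot r := isRoot_of_mem_roots hr
      rw [sub_eq_zero] at h0
      exact heval (h0 ▸ hroot)
    have hA : ((t.map (fun r => X - C r)).prod).eval x ≠ 0 := prod_eval_ne_zero x t htne
    obtain ⟨hd1, hd2⟩ := deriv_prod_eval x t htne
    set A := ((t.map (fun r => X - C r)).prod).eval x with hAdef
    set S1 := (t.map (fun r => (x - r)⁻¹)).sum with hS1def
    set S2 := (t.map (fun r => ((x - r)⁻¹)^2)).sum with hS2def
    have hpe : p.eval x = c * A := by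
      conv_lhs => rw [hfact]
      rw [eval_mul, eval_C]
    have hpd : (derivative p).eval x = c * (A * S1) := by
      conv_lhs => rw [hfact]
      rw [derivative_C_mul, eval_mul, eval_C, hd1]
    have hpdd : (derivative (derivative p)).eval x = c * (A * (S1^2 - S2)) := by
      conv_lhs => rw [hfact]
      rw [derivative_C_mul, derivative_C_mul, eval_mul, eval_C, hd2]
    have hS1ne : S1 ≠ 0 := by
      intro h0
      apply hx
      rw [hpd, h0, mul_zero, mul_zero]
    -- convert multiset sums to Fin sums
    set l := t.toList with hldef
    have hlen : l.length = n := by rw [hldef, Multiset.length_toList, hcard]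
    have hsum : ∀ f : ℝ → ℝ, (t.map f).sum = ∑ i : Fin l.length, f (l.get i) := by
      intro f
      have h1 : List.ofFn (f ∘ l.get) = l.map f := by
        rw [← List.map_ofFn, List.ofFn_get]
      calc (t.map f).sum = ((l : Multiset ℝ).map f).sum := by
              rw [hldef, Multiset.coe_toList]
        _ = (l.map f).sum := by rw [Multiset.map_coe, Multiset.sum_coe]
        _ = ∑ i : Fin l.length, f (l.get i) := by rw [← h1, List.sum_ofFn]; rfl
    have hs1 : S1 = ∑ i : Fin l.length, (x - l.get i)⁻¹ := hsum _
    have hs2 : S2 = ∑ i : Fin l.length, ((x - l.get i)⁻¹)^2 := hsum _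
    -- two distinct roots give distinct values
    obtain ⟨x0, y0, hxy, hrx, hry⟩ := hdist
    have hx0 : x0 ∈ l := Multiset.mem_toList.mpr (by rw [htdef]; exact mem_roots'.mpr ⟨hp0, hrx⟩)
    have hy0 : y0 ∈ l := Multiset.mem_toList.mpr (by rw [htdef]; exact mem_roots'.mpr ⟨hp0, hry⟩)
    obtain ⟨j, hj⟩ := List.mem_iff_get.mp hx0
    obtain ⟨k, hk⟩ := List.mem_iff_get.mp hy0
    have hajk : (x - l.get j)⁻¹ ≠ (x - l.get k)⁻¹ := by
      rw [hj, hk]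
      intro hcon
      exact hxy (by have := inv_inj.mp hcon; linarith)
    have hcs := strict_cauchy (fun i => (x - l.get i)⁻¹) j k hajk
    rw [← hs1] at hcs
    have hcs2 : S1^2 < (n:ℝ) * S2 := by
      rw [hs2]
      have : ((l.length : ℕ) : ℝ) = (n : ℝ) := by exact_mod_cast congrArg Nat.cast hlen
      rw [← this]
      exact hcs
    have hS1sq : 0 < S1^2 := sq_pos_of_ne_zero hS1ne
    have hfrac : (1:ℝ)/n < S2/S1^2 := by
      rw [div_lt_div_iff₀ hnR hS1sq]
      nlinarith
    have hLHS : (c*A) * (c * (A * (S1^2 - S2))) / (c * (A * S1))^2 = 1 - S2/S1^2 := by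
      field_simp
    rw [hpe, hpd, hpdd, hLHS]
    have hEq : ((n:ℝ) - 1)/n = 1 - 1/n := by field_simp
    rw [hEq]
    linarith
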